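/- Cauchy–Schwarz / Powers–Størmer estimate used for continuity: For positive semi-definite trace-class operators σ, σ' on a Hilbert space and bounded operators a₁, a₂, |tr(a₂ σ'^{1/2} a₁ (σ'^{1/2} − σ^{1/2}))| ≤ ‖a₂‖_∞ ‖a₁‖_∞ ‖σ'‖₁^{1/2} ‖σ' − σ‖₁^{1/2}. -/

import Mathlib

open scoped ENNReal Kronecker ComplexOrder
open Matrix MeasureTheory

/-- Apply a real function to a Hermitian matrix via the spectral decomposition
(junk value `0` if the matrix is not Hermitian). -/
noncomputable def mfun {n : Type*} [Fintype n] [DecidableEq n] (f : ℝ → ℂ)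
    (M : Matrix n n ℂ) : Matrix n n ℂ :=
  if h : M.IsHermitian then
    (h.eigenvectorUnitary : Matrix n n ℂ) *
      Matrix.diagonal (fun i => f (h.eigenvalues i)) *
      (star (h.eigenvectorUnitary : Matrix n n ℂ))
  else 0

/-- Matrix square root of a positive semidefinite matrix. -/
noncomputable def msqrt {n : Type*} [Fintype n] [DecidableEq n] (M : Matrix n n ℂ) :
    Matrix n n ℂ :=
  mfun (fun x => (Real.sqrt x : ℂ)) M

/-- Inverse square root, taken on the support. -/
noncomputable def minvsqrt {n : Type*} [Fintype n] [DecidableEq n] (M : Matrix n n ℂ) :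
    Matrix n n ℂ :=
  mfun (fun x : ℝ => if x ≤ 0 then (0:ℂ) else ((Real.sqrt x)⁻¹ : ℂ)) M

/-- Matrix logarithm (with `log 0 = 0` convention on the kernel). -/
noncomputable def mlog {n : Type*} [Fintype n] [DecidableEq n] (M : Matrix n n ℂ) :
    Matrix n n ℂ :=
  mfun (fun x => (Real.log x : ℂ)) M

/-- Complex power `M ^ z` of a positive semidefinite matrix, taken on the support. -/
noncomputable def mcpow {n : Type*} [Fintype n] [DecidableEq n] (z : ℂ)
    (M : Matrix n n ℂ) : Matrix n n ℂ :=
  mfun (fun x : ℝ => if x ≤ 0 then (0:ℂ) else (x : ℂ) ^ z) M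

/-- Projection onto the support of a positive semidefinite matrix. -/
noncomputable def suppProj {n : Type*} [Fintype n] [DecidableEq n] (M : Matrix n n ℂ) :
    Matrix n n ℂ :=
  mfun (fun x : ℝ => if x ≤ 0 then (0:ℂ) else 1) M

/-- Singular values of a (rectangular) complex matrix. -/
noncomputable def singVals {m n : Type*} [Fintype m] [Fintype n] [DecidableEq n]
    (L : Matrix m n ℂ) : n → ℝ :=
  fun i => Real.sqrt ((Matrix.posSemidef_conjTranspose_mul_self L).1.eigenvalues i)

/-- Trace norm (Schatten 1-norm). -/
noncomputable def trNorm {m n : Type*} [Fintype m] [Fintype n] [DecidableEq n]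
    (L : Matrix m n ℂ) : ℝ :=
  ∑ i, singVals L i

/-- Schatten `p`-norm, `p ∈ [1,∞]`. -/
noncomputable def schatten {m n : Type*} [Fintype m] [Fintype n] [DecidableEq n]
    (p : ℝ≥0∞) (L : Matrix m n ℂ) : ℝ :=
  if p = ∞ then ⨆ i, singVals L i
  else (∑ i, singVals L i ^ p.toReal) ^ (1 / p.toReal)

/-- Operator norm (largest singular value). -/
noncomputable def opNorm {m n : Type*} [Fintype m] [Fintype n] [DecidableEq n]
    (L : Matrix m n ℂ) : ℝ :=
  ⨆ i, singVals L i

/-- Quantum relative entropy `D(ρ‖σ) = tr(ρ (log ρ - log σ))`. -/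
noncomputable def relEnt {n : Type*} [Fintype n] [DecidableEq n]
    (ρ σ : Matrix n n ℂ) : ℝ :=
  ((ρ * (mlog ρ - mlog σ)).trace).re

/-- Von Neumann entropy. -/
noncomputable def vnEnt {n : Type*} [Fintype n] [DecidableEq n]
    (ρ : Matrix n n ℂ) : ℝ :=
  -((ρ * mlog ρ).trace).re

/-- Fidelity `F(ρ,σ) = ‖√ρ √σ‖₁`. -/
noncomputable def fid {n : Type*} [Fintype n] [DecidableEq n]
    (ρ σ : Matrix n n ℂ) : ℝ :=
  trNorm (msqrt ρ * msqrt σ)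

/-- `supp ρ ⊆ supp σ`, expressed via kernels (for PSD matrices). -/
def suppLE {n : Type*} [Fintype n] (ρ σ : Matrix n n ℂ) : Prop :=
  ∀ v, σ.mulVec v = 0 → ρ.mulVec v = 0

/-- Trace-preserving linear map. -/
def IsTP {m n : Type*} [Fintype m] [Fintype n]
    (Φ : Matrix m m ℂ →ₗ[ℂ] Matrix n n ℂ) : Prop :=
  ∀ M, (Φ M).trace = M.trace

/-- Completely positive map, via the Kraus representation. -/
def IsCP {m n : Type*} [Fintype m] [Fintype n]
    (Φ : Matrix m m ℂ →ₗ[ℂ] Matrix n n ℂ) : Prop :=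
  ∃ (k : ℕ) (K : Fin k → Matrix n m ℂ), ∀ M, Φ M = ∑ i, K i * M * (K i)ᴴ

/-- `Φdag` is the adjoint of `Φ` w.r.t. the Hilbert–Schmidt inner product. -/
def IsAdjointPair {m n : Type*} [Fintype m] [Fintype n]
    (Φ : Matrix m m ℂ →ₗ[ℂ] Matrix n n ℂ)
    (Φdag : Matrix n n ℂ →ₗ[ℂ] Matrix m m ℂ) : Prop :=
  ∀ X Y, ((Xᴴ * Φ Y).trace) = (((Φdag X)ᴴ * Y).trace)

/-- Petz recovery map `P_{σ,N}` where `τ = N(σ)` and `Φdag = N†`. -/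
noncomputable def petz {m n : Type*} [Fintype m] [DecidableEq m] [Fintype n] [DecidableEq n]
    (σ : Matrix m m ℂ) (τ : Matrix n n ℂ)
    (Φdag : Matrix n n ℂ →ₗ[ℂ] Matrix m m ℂ) (X : Matrix n n ℂ) : Matrix m m ℂ :=
  msqrt σ * Φdag (minvsqrt τ * X * minvsqrt τ) * msqrt σ

/-- Rotated Petz recovery map `R^t_{σ,N}`. -/
noncomputable def rotPetz {m n : Type*} [Fintype m] [DecidableEq m] [Fintype n] [DecidableEq n]
    (t : ℝ) (σ : Matrix m m ℂ) (τ : Matrix n n ℂ)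
    (Φdag : Matrix n n ℂ →ₗ[ℂ] Matrix m m ℂ) (X : Matrix n n ℂ) : Matrix m m ℂ :=
  mcpow (-(Complex.I * t)) σ *
    petz σ τ Φdag (mcpow (Complex.I * t) τ * X * mcpow (-(Complex.I * t)) τ) *
    mcpow (Complex.I * t) σ

/-- Partial trace over the second (environment) factor. -/
noncomputable def ptraceE {b e : Type*} [Fintype e]
    (M : Matrix (b × e) (b × e) ℂ) : Matrix b b ℂ :=
  fun i j => ∑ k : e, M (i, k) (j, k)

/-- The density `β₀(t) = (π/2) (cosh(π t) + 1)⁻¹`. -/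
noncomputable def beta0 (t : ℝ) : ℝ :=
  Real.pi / 2 * (Real.cosh (Real.pi * t) + 1)⁻¹

section CSPS

open Complex

variable {n : Type*} [Fintype n] [DecidableEq n]

lemma mfun_eq {M : Matrix n n ℂ} (hM : M.IsHermitian) (f : ℝ → ℂ) :
    mfun f M = (hM.eigenvectorUnitary : Matrix n n ℂ) *
      Matrix.diagonal (fun i => f (hM.eigenvalues i)) *
      (star (hM.eigenvectorUnitary : Matrix n n ℂ)) := by
  rw [mfun, dif_pos hM]

lemma star_mul_self' {M : Matrix n n ℂ} (hM : M.IsHermitian) :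
    star (hM.eigenvectorUnitary : Matrix n n ℂ) * (hM.eigenvectorUnitary : Matrix n n ℂ) = 1 :=
  Matrix.mem_unitaryGroup_iff'.mp hM.eigenvectorUnitary.2

lemma mul_star_self' {M : Matrix n n ℂ} (hM : M.IsHermitian) :
    (hM.eigenvectorUnitary : Matrix n n ℂ) * star (hM.eigenvectorUnitary : Matrix n n ℂ) = 1 :=
  Matrix.mem_unitaryGroup_iff.mp hM.eigenvectorUnitary.2

lemma mfun_mul_mfun {M : Matrix n n ℂ} (hM : M.IsHermitian) (f g : ℝ → ℂ) :
    mfun f M * mfun g M = mfun (fun x => f x * g x) M := by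
  rw [mfun_eq hM f, mfun_eq hM g, mfun_eq hM (fun x => f x * g x)]
  set U := (hM.eigenvectorUnitary : Matrix n n ℂ)
  have e : U * Matrix.diagonal (fun i => f (hM.eigenvalues i)) * star U *
      (U * Matrix.diagonal (fun i => g (hM.eigenvalues i)) * star U) =
      U * (Matrix.diagonal (fun i => f (hM.eigenvalues i)) * (star U * U) *
        Matrix.diagonal (fun i => g (hM.eigenvalues i))) * star U := by
    simp only [Matrix.mul_assoc]
  rw [e, star_mul_self' hM, Matrix.mul_one, Matrix.diagonal_mul_diagonal]

lemma mfun_trace {M : Matrix n n ℂ} (hM : M.IsHermitian) (f : ℝ → ℂ) :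
    (mfun f M).trace = ∑ i, f (hM.eigenvalues i) := by
  rw [mfun_eq hM, Matrix.trace_mul_cycle, star_mul_self' hM,
    Matrix.one_mul, Matrix.trace_diagonal]

lemma mfun_isHermitian {M : Matrix n n ℂ} (hM : M.IsHermitian) (g : ℝ → ℝ) :
    (mfun (fun x => ((g x : ℝ) : ℂ)) M).IsHermitian := by
  rw [mfun_eq hM]
  have hd : (Matrix.diagonal (fun i => ((g (hM.eigenvalues i) : ℝ) : ℂ))).IsHermitian := by
    rw [Matrix.IsHermitian, Matrix.diagonal_conjTranspose]
    have hst : (star fun i => ((g (hM.eigenvalues i) : ℝ) : ℂ))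
        = fun i => ((g (hM.eigenvalues i) : ℝ) : ℂ) := by
      funext i
      simp [Complex.star_def, Complex.conj_ofReal]
    rw [hst]
  have h := Matrix.isHermitian_mul_mul_conjTranspose
    (hM.eigenvectorUnitary : Matrix n n ℂ) hd
  rwa [← Matrix.star_eq_conjTranspose] at h

lemma mfun_posSemidef {M : Matrix n n ℂ} (hM : M.IsHermitian) (g : ℝ → ℝ)
    (hg : ∀ x, 0 ≤ g x) : (mfun (fun x => ((g x : ℝ) : ℂ)) M).PosSemidef := by
  rw [mfun_eq hM]
  have hd : (Matrix.diagonal (fun i => ((g (hM.eigenvalues i) : ℝ) : ℂ))).PosSemidef := by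
    refine Matrix.posSemidef_diagonal_iff.mpr fun i => ?_
    rw [Complex.zero_le_real]
    exact hg _
  have := hd.mul_mul_conjTranspose_same (hM.eigenvectorUnitary : Matrix n n ℂ)
  rwa [← Matrix.star_eq_conjTranspose] at this

lemma mfun_id {M : Matrix n n ℂ} (hM : M.IsHermitian) :
    mfun (fun x => ((x : ℝ) : ℂ)) M = M := by
  rw [mfun_eq hM]
  exact hM.spectral_theorem.symm

open scoped MatrixOrder in
lemma msqrt_eq {M : Matrix n n ℂ} (hM : M.PosSemidef) : msqrt M = CFC.sqrt M := by
  have h0 : 0 ≤ M := hM.nonneg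
  rw [msqrt, mfun, dif_pos hM.1, CFC.sqrt_eq_cfc, cfc_nnreal_eq_real _ M, hM.1.cfc_eq,
    Matrix.IsHermitian.cfc, Unitary.conjStarAlgAut_apply]
  congr 2
  ext i j
  simp [Matrix.diagonal_apply, Real.coe_sqrt, max_eq_left (hM.eigenvalues_nonneg i)]

open scoped MatrixOrder in
lemma msqrt_posSemidef {M : Matrix n n ℂ} (hM : M.PosSemidef) : (msqrt M).PosSemidef := by
  rw [msqrt_eq hM]; exact (CFC.sqrt_nonneg M).posSemidef

open scoped MatrixOrder in
lemma msqrt_mul_self {M : Matrix n n ℂ} (hM : M.PosSemidef) : msqrt M * msqrt M = M := by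
  rw [msqrt_eq hM]; exact CFC.sqrt_mul_sqrt_self M hM.nonneg

open scoped MatrixOrder in
lemma msqrt_eq_of_sq {P Q : Matrix n n ℂ} (hP : P.PosSemidef) (h : P * P = Q) :
    msqrt Q = P := by
  have hQ : Q.PosSemidef := by
    have := Matrix.posSemidef_conjTranspose_mul_self P
    rwa [hP.1.eq, h] at this
  rw [msqrt_eq hQ]
  exact CFC.sqrt_unique h hP.nonneg

lemma trace_mul_diag (X : Matrix n n ℂ) (d : n → ℂ) :
    (X * Matrix.diagonal d).trace = ∑ i, X i i * d i := by
  simp [Matrix.trace, Matrix.diag, Matrix.mul_diagonal]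

lemma trace_mul_mfun {M : Matrix n n ℂ} (hM : M.IsHermitian) (f : ℝ → ℂ) (X : Matrix n n ℂ) :
    (X * mfun f M).trace = ∑ i,
      (star (hM.eigenvectorUnitary : Matrix n n ℂ) * X *
        (hM.eigenvectorUnitary : Matrix n n ℂ)) i i * f (hM.eigenvalues i) := by
  rw [mfun_eq hM]
  set U := (hM.eigenvectorUnitary : Matrix n n ℂ)
  set D := Matrix.diagonal (fun i => f (hM.eigenvalues i))
  have e1 : X * (U * D * star U) = X * U * D * star U := by simp only [Matrix.mul_assoc]
  rw [e1, Matrix.trace_mul_cycle]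
  have e2 : star U * (X * U) = star U * X * U := by simp only [Matrix.mul_assoc]
  rw [e2, trace_mul_diag]

lemma psd_diag_re_nonneg {P : Matrix n n ℂ} (hP : P.PosSemidef) (i : n) : 0 ≤ (P i i).re := by
  exact (Complex.le_def.mp hP.diag_nonneg).1

lemma psd_trace_re_nonneg {P : Matrix n n ℂ} (hP : P.PosSemidef) : 0 ≤ (P.trace).re := by
  rw [Matrix.trace, Complex.re_sum]
  exact Finset.sum_nonneg fun i _ => psd_diag_re_nonneg hP i

lemma singVals_nonneg {m : Type*} [Fintype m] (L : Matrix m n ℂ) (i : n) : 0 ≤ singVals L i :=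
  Real.sqrt_nonneg _

lemma opNorm_nonneg {m : Type*} [Fintype m] (L : Matrix m n ℂ) : 0 ≤ opNorm L :=
  Real.iSup_nonneg (singVals_nonneg L)

lemma singVals_le_opNorm {m : Type*} [Fintype m] (L : Matrix m n ℂ) (i : n) :
    singVals L i ≤ opNorm L :=
  le_ciSup (Set.Finite.bddAbove (Set.finite_range _)) i

lemma trace_aHa_mul_le (a : Matrix n n ℂ) {ρ : Matrix n n ℂ} (hρ : ρ.PosSemidef) :
    ((aᴴ * a * ρ).trace).re ≤ opNorm a ^ 2 * (ρ.trace).re := by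
  have hP := Matrix.posSemidef_conjTranspose_mul_self a
  have hH : (aᴴ * a).IsHermitian := hP.1
  set U := (hH.eigenvectorUnitary : Matrix n n ℂ) with hU
  have h1 : (aᴴ * a * ρ).trace = (ρ * (aᴴ * a)).trace := Matrix.trace_mul_comm _ _
  have h2 : ρ * (aᴴ * a) = ρ * mfun (fun x => ((x : ℝ) : ℂ)) (aᴴ * a) := by
    rw [mfun_id hH]
  rw [h1, h2, trace_mul_mfun hH]
  have hpsd : (star U * ρ * U).PosSemidef := by
    have := hρ.conjTranspose_mul_mul_same U
    rwa [← Matrix.star_eq_conjTranspose] at this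
  have hdiag : ∀ i, 0 ≤ ((star U * ρ * U) i i).re := fun i => psd_diag_re_nonneg hpsd i
  have heig : ∀ i, hH.eigenvalues i ≤ opNorm a ^ 2 := by
    intro i
    have h := singVals_le_opNorm a i
    have h0 := singVals_nonneg a i
    have hsq : singVals a i ^ 2 ≤ opNorm a ^ 2 := by
      have := pow_le_pow_left₀ h0 h 2
      exact this
    rwa [singVals, Real.sq_sqrt (hP.eigenvalues_nonneg i)] at hsq
  calc (∑ i, (star U * ρ * U) i i * ((hH.eigenvalues i : ℝ) : ℂ)).re
      = ∑ i, ((star U * ρ * U) i i).re * hH.eigenvalues i := by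
        rw [Complex.re_sum]
        exact Finset.sum_congr rfl fun i _ => by simp [Complex.mul_re]
    _ ≤ ∑ i, ((star U * ρ * U) i i).re * (opNorm a ^ 2) :=
        Finset.sum_le_sum fun i _ => mul_le_mul_of_nonneg_left (heig i) (hdiag i)
    _ = opNorm a ^ 2 * ∑ i, ((star U * ρ * U) i i).re := by
        rw [Finset.mul_sum]; exact Finset.sum_congr rfl fun i _ => mul_comm _ _
    _ = opNorm a ^ 2 * ((star U * ρ * U).trace).re := by
        rw [Matrix.trace, Complex.re_sum]; rfl
    _ = opNorm a ^ 2 * (ρ.trace).re := by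
        congr 2
        rw [Matrix.trace_mul_cycle, mul_star_self' hH, Matrix.one_mul]

lemma re_trace_conjTranspose_mul_self (X : Matrix n n ℂ) :
    ((Xᴴ * X).trace).re = ∑ p : n × n, ‖X p.2 p.1‖ ^ 2 := by
  have h : (Xᴴ * X).trace = ∑ p : n × n, (starRingEnd ℂ) (X p.2 p.1) * X p.2 p.1 := by
    rw [Matrix.trace, Fintype.sum_prod_type]
    simp [Matrix.diag, Matrix.mul_apply, Matrix.conjTranspose_apply]
  rw [h, Complex.re_sum]
  exact Finset.sum_congr rfl fun p _ => by
    rw [mul_comm, Complex.mul_conj]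
    simp [Complex.sq_norm]

lemma trace_abs_le (X Y : Matrix n n ℂ) :
    ‖(X * Y).trace‖ ≤
      Real.sqrt (((Xᴴ * X).trace).re) * Real.sqrt (((Yᴴ * Y).trace).re) := by
  have htr : (X * Y).trace = ∑ p : n × n, X p.1 p.2 * Y p.2 p.1 := by
    rw [Matrix.trace, Fintype.sum_prod_type]
    simp [Matrix.diag, Matrix.mul_apply]
  have hswap : ∑ p : n × n, ‖X p.1 p.2‖ ^ 2
      = ∑ p : n × n, ‖X p.2 p.1‖ ^ 2 :=
    Fintype.sum_equiv (Equiv.prodComm n n) _ _ (fun p => rfl)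
  calc ‖(X * Y).trace‖
      ≤ ∑ p : n × n, ‖X p.1 p.2‖ * ‖Y p.2 p.1‖ := by
        rw [htr]
        refine (norm_sum_le _ _).trans_eq ?_
        exact Finset.sum_congr rfl fun p _ => norm_mul _ _
    _ ≤ Real.sqrt (∑ p : n × n, ‖X p.1 p.2‖ ^ 2) *
        Real.sqrt (∑ p : n × n, ‖Y p.2 p.1‖ ^ 2) :=
        Real.sum_mul_le_sqrt_mul_sqrt _ _ _
    _ = _ := by
        rw [hswap, re_trace_conjTranspose_mul_self X, re_trace_conjTranspose_mul_self Y]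

lemma trNorm_nonneg {m : Type*} [Fintype m] (L : Matrix m n ℂ) : 0 ≤ trNorm L :=
  Finset.sum_nonneg fun i _ => Real.sqrt_nonneg _

lemma trNorm_eq_trace_msqrt (L : Matrix n n ℂ) :
    trNorm L = ((msqrt (Lᴴ * L)).trace).re := by
  have hH := (Matrix.posSemidef_conjTranspose_mul_self L).1
  rw [msqrt, mfun_trace hH, Complex.re_sum]
  simp only [Complex.ofReal_re]
  rfl

lemma trNorm_psd {ρ : Matrix n n ℂ} (hρ : ρ.PosSemidef) : trNorm ρ = (ρ.trace).re := by
  rw [trNorm_eq_trace_msqrt, hρ.1.eq, msqrt_eq_of_sq hρ rfl]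

end CSPS

section CSPS2

variable {n : Type*} [Fintype n] [DecidableEq n]

lemma diag_re_le_one {W : Matrix n n ℂ} (hWW : Wᴴ * W = 1) (j : n) : |(W j j).re| ≤ 1 := by
  have h1 : ((Wᴴ * W) j j).re = ∑ i, Complex.normSq (W i j) := by
    rw [Matrix.mul_apply, Complex.re_sum]
    exact Finset.sum_congr rfl fun i _ => by
      rw [Matrix.conjTranspose_apply, mul_comm, Complex.star_def, Complex.mul_conj,
        Complex.ofReal_re]
  rw [hWW] at h1
  have h2 : ∑ i, Complex.normSq (W i j) = 1 := by
    rw [← h1, Matrix.one_apply_eq, Complex.one_re]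
  have hcol : Complex.normSq (W j j) ≤ 1 := by
    calc Complex.normSq (W j j) ≤ ∑ i, Complex.normSq (W i j) :=
        Finset.single_le_sum (f := fun i => Complex.normSq (W i j))
          (fun i _ => Complex.normSq_nonneg _) (Finset.mem_univ j)
      _ = 1 := h2
  have hsq : (W j j).re ^ 2 ≤ 1 := by
    have hn := Complex.normSq_apply (W j j)
    nlinarith [sq_nonneg (W j j).im]
  exact (sq_le_one_iff_abs_le_one _).mp hsq

lemma powers_stormer_general {A B : Matrix n n ℂ} (hA : A.PosSemidef) (hB : B.PosSemidef) :
    (((B - A) * (B - A)).trace).re ≤ trNorm (B * B - A * A) := by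
  set C := B - A with hCdef
  set D := B + A with hDdef
  have hC : C.IsHermitian := hB.1.sub hA.1
  have hD : D.PosSemidef := hB.add hA
  set M : Matrix n n ℂ := B * B - A * A with hMdef
  have hBBH : (B * B).IsHermitian := by
    have h := Matrix.isHermitian_conjTranspose_mul_self B
    rwa [hB.1.eq] at h
  have hAAH : (A * A).IsHermitian := by
    have h := Matrix.isHermitian_conjTranspose_mul_self A
    rwa [hA.1.eq] at h
  have hMH : M.IsHermitian := hBBH.sub hAAH
  set sgn : ℝ → ℂ := fun x => if x < 0 then -1 else 1 with hsgn
  set S := mfun sgn C with hSdef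
  set Cabs := mfun (fun x => ((|x| : ℝ) : ℂ)) C with hCabs
  have hCid : mfun (fun x => ((x : ℝ) : ℂ)) C = C := mfun_id hC
  have hsgn_mul : ∀ x : ℝ, sgn x * ((x : ℝ) : ℂ) = ((|x| : ℝ) : ℂ) := by
    intro x
    by_cases hx : x < 0
    · simp [hsgn, hx, abs_of_neg hx]
    · simp [hsgn, hx, abs_of_nonneg (not_lt.mp hx)]
  have hSC : S * C = Cabs := by
    have h := mfun_mul_mfun hC sgn (fun x => ((x : ℝ) : ℂ))
    rw [hCid] at h
    have hfg : (fun x : ℝ => sgn x * ((x : ℝ) : ℂ)) = fun x : ℝ => ((|x| : ℝ) : ℂ) :=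
      funext fun x => hsgn_mul x
    rw [hSdef, h, hfg, hCabs]
  have hCS : C * S = Cabs := by
    have h := mfun_mul_mfun hC (fun x => ((x : ℝ) : ℂ)) sgn
    rw [hCid] at h
    have hfg : (fun x : ℝ => ((x : ℝ) : ℂ) * sgn x) = fun x : ℝ => ((|x| : ℝ) : ℂ) :=
      funext fun x => by rw [mul_comm]; exact hsgn_mul x
    rw [hSdef, h, hfg, hCabs]
  -- trace identity: tr(M * S) = tr(D * Cabs)
  have hCD : C * D + D * C = (2 : ℂ) • M := by
    rw [hMdef, hCdef, hDdef]
    simp only [sub_mul, mul_add, add_mul, mul_sub, two_smul]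
    abel
  have eA : (C * D * S).trace = (D * Cabs).trace := by
    rw [Matrix.trace_mul_cycle, hSC, Matrix.trace_mul_comm]
  have eB : (D * C * S).trace = (D * Cabs).trace := by
    rw [Matrix.mul_assoc, hCS]
  have htr_eq : (M * S).trace = (D * Cabs).trace := by
    have h2 : ((2:ℂ) • (M * S)).trace = ((2:ℂ) • (D * Cabs)).trace := by
      have e1 : ((2:ℂ) • (M * S)) = ((2:ℂ) • M) * S := (smul_mul_assoc _ _ _).symm
      rw [e1, ← hCD, add_mul, Matrix.trace_add, eA, eB, Matrix.trace_smul, smul_eq_mul, two_mul]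
    simp only [Matrix.trace_smul, smul_eq_mul] at h2
    exact mul_left_cancel₀ two_ne_zero h2
  -- lower bound: re tr(C*C) ≤ re tr(D * Cabs)
  set U := (hC.eigenvectorUnitary : Matrix n n ℂ) with hU
  have hdiagC : star U * C * U = Matrix.diagonal (fun i => ((hC.eigenvalues i : ℝ) : ℂ)) :=
    by simpa [Unitary.conjStarAlgAut_apply, Function.comp_def] using
      hC.conjStarAlgAut_star_eigenvectorUnitary
  have hDCabs : (D * Cabs).trace
      = ∑ i, (star U * D * U) i i * ((|hC.eigenvalues i| : ℝ) : ℂ) :=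
    trace_mul_mfun hC _ D
  have hCC : C * C = mfun (fun x => ((x : ℝ) : ℂ) * ((x : ℝ) : ℂ)) C := by
    have h := mfun_mul_mfun hC (fun x => ((x : ℝ) : ℂ)) (fun x => ((x : ℝ) : ℂ))
    rw [hCid] at h
    exact h
  have hCCtr : ((C * C).trace).re = ∑ i, hC.eigenvalues i * hC.eigenvalues i := by
    rw [hCC, mfun_trace hC, Complex.re_sum]
    exact Finset.sum_congr rfl fun i _ => by
      rw [← Complex.ofReal_mul, Complex.ofReal_re]
  have hDpC : D + C = B + B := by rw [hDdef, hCdef]; abel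
  have hDmC : D - C = A + A := by rw [hDdef, hCdef]; abel
  have hdge : ∀ i, |hC.eigenvalues i| ≤ ((star U * D * U) i i).re := by
    intro i
    have hconj : ∀ {P : Matrix n n ℂ}, P.PosSemidef → 0 ≤ ((star U * P * U) i i).re := by
      intro P hP
      refine psd_diag_re_nonneg ?_ i
      have := hP.conjTranspose_mul_mul_same U
      rwa [← Matrix.star_eq_conjTranspose] at this
    have h1 : 0 ≤ ((star U * (D + C) * U) i i).re := hconj (hDpC ▸ hB.add hB)
    have h2 : 0 ≤ ((star U * (D - C) * U) i i).re := hconj (hDmC ▸ hA.add hA)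
    have e1 : star U * (D + C) * U = star U * D * U + star U * C * U := by
      rw [mul_add, add_mul]
    have e2 : star U * (D - C) * U = star U * D * U - star U * C * U := by
      rw [mul_sub, sub_mul]
    rw [e1, hdiagC] at h1
    rw [e2, hdiagC] at h2
    rw [Matrix.add_apply, Complex.add_re, Matrix.diagonal_apply_eq, Complex.ofReal_re] at h1
    rw [Matrix.sub_apply, Complex.sub_re, Matrix.diagonal_apply_eq, Complex.ofReal_re] at h2
    rw [abs_le]
    constructor <;> linarith
  have hlow : ((C * C).trace).re ≤ ((D * Cabs).trace).re := by
    rw [hCCtr, hDCabs, Complex.re_sum]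
    refine Finset.sum_le_sum fun i _ => ?_
    have hre : ((star U * D * U) i i * ((|hC.eigenvalues i| : ℝ) : ℂ)).re
        = ((star U * D * U) i i).re * |hC.eigenvalues i| := by
      simp [Complex.mul_re]
    rw [hre]
    calc hC.eigenvalues i * hC.eigenvalues i
        = |hC.eigenvalues i| * |hC.eigenvalues i| := (abs_mul_abs_self _).symm
      _ ≤ ((star U * D * U) i i).re * |hC.eigenvalues i| :=
          mul_le_mul_of_nonneg_right (hdge i) (abs_nonneg _)
  -- properties of S
  have hSH : S.IsHermitian := by
    have hfun : sgn = fun x : ℝ => (((if x < 0 then (-1 : ℝ) else 1) : ℝ) : ℂ) := by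
      funext x; by_cases hx : x < 0 <;> simp [hsgn, hx]
    rw [hSdef, hfun]
    exact mfun_isHermitian hC _
  have hSS : S * S = 1 := by
    rw [hSdef, mfun_mul_mfun hC]
    have h : ∀ x : ℝ, sgn x * sgn x = 1 := fun x => by
      by_cases hx : x < 0 <;> simp [hsgn, hx]
    simp only [h]
    rw [mfun_eq hC]
    simp only [Matrix.diagonal_one]
    rw [Matrix.mul_one, mul_star_self' hC]
  -- upper bound: re tr(M*S) ≤ trNorm M
  set V := (hMH.eigenvectorUnitary : Matrix n n ℂ) with hV
  set W := star V * S * V with hW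
  have hVV : star V * V = 1 := star_mul_self' hMH
  have hVV' : V * star V = 1 := mul_star_self' hMH
  have hMabs : trNorm M = ∑ j, |hMH.eigenvalues j| := by
    rw [trNorm_eq_trace_msqrt, hMH.eq]
    have hMid : mfun (fun x => ((x : ℝ) : ℂ)) M = M := mfun_id hMH
    have habs : msqrt (M * M) = mfun (fun x => ((|x| : ℝ) : ℂ)) M := by
      refine msqrt_eq_of_sq (mfun_posSemidef hMH _ fun x => abs_nonneg x) ?_
      rw [mfun_mul_mfun hMH]
      have h : ∀ x : ℝ, ((|x| : ℝ) : ℂ) * ((|x| : ℝ) : ℂ) = ((x : ℝ) : ℂ) * ((x : ℝ) : ℂ) :=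
        fun x => by rw [← Complex.ofReal_mul, ← Complex.ofReal_mul, abs_mul_abs_self]
      simp only [h]
      have hmm := mfun_mul_mfun hMH (fun x => ((x : ℝ) : ℂ)) (fun x => ((x : ℝ) : ℂ))
      rw [hMid] at hmm
      exact hmm.symm
    rw [habs, mfun_trace hMH, Complex.re_sum]
    exact Finset.sum_congr rfl fun j _ => Complex.ofReal_re _
  have hMS : (M * S).trace = ∑ j, W j j * ((hMH.eigenvalues j : ℝ) : ℂ) := by
    rw [Matrix.trace_mul_comm]
    conv_lhs => rw [← mfun_id hMH]
    rw [trace_mul_mfun hMH]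
  have hWH : Wᴴ = W := by
    rw [← Matrix.star_eq_conjTranspose, hW]
    simp only [Matrix.star_mul, star_star]
    rw [Matrix.star_eq_conjTranspose S, hSH.eq]
    simp only [Matrix.mul_assoc]
  have hWW : Wᴴ * W = 1 := by
    rw [hWH, hW]
    have e : star V * S * V * (star V * S * V) = star V * (S * ((V * star V) * (S * V))) := by
      simp only [Matrix.mul_assoc]
    rw [e, hVV', Matrix.one_mul, ← Matrix.mul_assoc S S V, hSS, Matrix.one_mul, hVV]
  have hWre : ∀ j, |(W j j).re| ≤ 1 := fun j => diag_re_le_one hWW j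
  have hup : ((M * S).trace).re ≤ trNorm M := by
    rw [hMS, Complex.re_sum, hMabs]
    refine Finset.sum_le_sum fun j _ => ?_
    have hre : (W j j * ((hMH.eigenvalues j : ℝ) : ℂ)).re
        = (W j j).re * hMH.eigenvalues j := by
      simp [Complex.mul_re]
    rw [hre]
    calc (W j j).re * hMH.eigenvalues j ≤ |(W j j).re * hMH.eigenvalues j| := le_abs_self _
      _ = |(W j j).re| * |hMH.eigenvalues j| := abs_mul _ _
      _ ≤ 1 * |hMH.eigenvalues j| := mul_le_mul_of_nonneg_right (hWre j) (abs_nonneg _)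
      _ = |hMH.eigenvalues j| := one_mul _
  calc ((C * C).trace).re ≤ ((D * Cabs).trace).re := hlow
    _ = ((M * S).trace).re := by rw [htr_eq]
    _ ≤ trNorm M := hup

lemma powers_stormer {σ σ' : Matrix n n ℂ} (hσ : σ.PosSemidef) (hσ' : σ'.PosSemidef) :
    (((msqrt σ' - msqrt σ) * (msqrt σ' - msqrt σ)).trace).re ≤ trNorm (σ' - σ) := by
  have h := powers_stormer_general (msqrt_posSemidef hσ) (msqrt_posSemidef hσ')
  rwa [msqrt_mul_self hσ', msqrt_mul_self hσ] at h

end CSPS2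

/-- Cauchy–Schwarz / Powers–Størmer estimate. -/
theorem cauchy_schwarz_powers_stormer {n : ℕ}
    (σ σ' a₁ a₂ : Matrix (Fin n) (Fin n) ℂ)
    (hσ : σ.PosSemidef) (hσ' : σ'.PosSemidef) :
    ‖(a₂ * msqrt σ' * a₁ * (msqrt σ' - msqrt σ)).trace‖ ≤
      opNorm a₂ * opNorm a₁ * trNorm σ' ^ ((1 : ℝ) / 2) *
        trNorm (σ' - σ) ^ ((1 : ℝ) / 2) := by
  have hA := msqrt_posSemidef hσ
  have hB := msqrt_posSemidef hσ'
  set A := msqrt σ with hAdef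
  set B := msqrt σ' with hBdef
  set C := B - A with hCdef
  have hC : C.IsHermitian := hB.1.sub hA.1
  set X := a₂ * B with hX
  set Y := a₁ * C with hY
  have hassoc : a₂ * B * a₁ * C = X * Y := by
    rw [hX, hY]; simp only [Matrix.mul_assoc]
  rw [hassoc]
  have hBB : B * B = σ' := msqrt_mul_self hσ'
  have h2 : ((Xᴴ * X).trace).re ≤ opNorm a₂ ^ 2 * trNorm σ' := by
    have e : Xᴴ * X = Bᴴ * (a₂ᴴ * a₂) * B := by
      rw [hX, Matrix.conjTranspose_mul]; simp only [Matrix.mul_assoc]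
    have etr : (Xᴴ * X).trace = (a₂ᴴ * a₂ * σ').trace := by
      rw [e, Matrix.trace_mul_cycle, hB.1.eq, hBB, Matrix.trace_mul_comm]
    rw [etr, trNorm_psd hσ']
    exact trace_aHa_mul_le a₂ hσ'
  have hCCpsd : (C * C).PosSemidef := by
    have h := Matrix.posSemidef_conjTranspose_mul_self C
    rwa [hC.eq] at h
  have h1 : ((Yᴴ * Y).trace).re ≤ opNorm a₁ ^ 2 * trNorm (σ' - σ) := by
    have e : Yᴴ * Y = Cᴴ * (a₁ᴴ * a₁) * C := by
      rw [hY, Matrix.conjTranspose_mul]; simp only [Matrix.mul_assoc]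
    have etr : (Yᴴ * Y).trace = (a₁ᴴ * a₁ * (C * C)).trace := by
      rw [e, Matrix.trace_mul_cycle, hC.eq, Matrix.trace_mul_comm]
    rw [etr]
    calc ((a₁ᴴ * a₁ * (C * C)).trace).re
        ≤ opNorm a₁ ^ 2 * ((C * C).trace).re := trace_aHa_mul_le a₁ hCCpsd
      _ ≤ opNorm a₁ ^ 2 * trNorm (σ' - σ) :=
          mul_le_mul_of_nonneg_left (powers_stormer hσ hσ') (sq_nonneg _)
  refine (trace_abs_le X Y).trans ?_
  have s2 : Real.sqrt (((Xᴴ * X).trace).re) ≤ opNorm a₂ * Real.sqrt (trNorm σ') := by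
    refine (Real.sqrt_le_sqrt h2).trans_eq ?_
    rw [Real.sqrt_mul (sq_nonneg _), Real.sqrt_sq (opNorm_nonneg _)]
  have s1 : Real.sqrt (((Yᴴ * Y).trace).re) ≤ opNorm a₁ * Real.sqrt (trNorm (σ' - σ)) := by
    refine (Real.sqrt_le_sqrt h1).trans_eq ?_
    rw [Real.sqrt_mul (sq_nonneg _), Real.sqrt_sq (opNorm_nonneg _)]
  calc Real.sqrt (((Xᴴ * X).trace).re) * Real.sqrt (((Yᴴ * Y).trace).re)
      ≤ (opNorm a₂ * Real.sqrt (trNorm σ')) * (opNorm a₁ * Real.sqrt (trNorm (σ' - σ))) :=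
        mul_le_mul s2 s1 (Real.sqrt_nonneg _)
          (mul_nonneg (opNorm_nonneg _) (Real.sqrt_nonneg _))
    _ = opNorm a₂ * opNorm a₁ * trNorm σ' ^ ((1 : ℝ) / 2) * trNorm (σ' - σ) ^ ((1 : ℝ) / 2) := by
        rw [← Real.sqrt_eq_rpow, ← Real.sqrt_eq_rpow]; ring
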